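/- Let J: ℝⁿ → ℝ, and let Ĵ(u), Ĵ(u+αs) be approximate objective values with |Ĵ(v) - J(v)| ≤ e for v ∈ {u, u+αs}, where e ≤ ε c₁ α ‖s‖² and ‖s + ∇J(u)‖ ≤ ε‖s‖ with ε ∈ [0, 1/2), c₁ ∈ (0,1), α > 0. If the acceptance test Ĵ(u + αs) - Ĵ(u) ≤ -(1 + 3ε) c₁ α ‖s‖² is passed, then the exact Armijo condition J(u + αs) ≤ J(u) + α c₁ ∇J(u)ᵀ s holds. -/
import Mathlib


open scoped RealInnerProductSpace

/-- If sampled objective values `Ĵ` approximate `J` with absolute error at most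
`e ≤ ε c₁ α ‖s‖²`, and the acceptance test
`Ĵ(u+αs) - Ĵ(u) ≤ -(1+3ε) c₁ α ‖s‖²` is passed, then the exact Armijo condition holds. -/
theorem armijo_of_acceptance_test
    (n : ℕ) (J : EuclideanSpace ℝ (Fin n) → ℝ)
    (u s gJ : EuclideanSpace ℝ (Fin n)) (α c₁ ε e Ju Jus : ℝ)
    (hgrad : HasGradientAt J gJ u)
    (hα : 0 < α) (hc₁ : 0 < c₁) (hc₁' : c₁ < 1)
    (hε0 : 0 ≤ ε) (hε : ε < 1/2)
    (herr : ‖s + gJ‖ ≤ ε * ‖s‖)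
    (he : e ≤ ε * c₁ * α * ‖s‖^2)
    (hJu : |Ju - J u| ≤ e) (hJus : |Jus - J (u + α • s)| ≤ e)
    (htest : Jus - Ju ≤ -(1 + 3*ε) * c₁ * α * ‖s‖^2) :
    J (u + α • s) ≤ J u + α * c₁ * ⟪gJ, s⟫ := by
  have hs := norm_nonneg s
  have h2 : |⟪s + gJ, s⟫| ≤ ε * ‖s‖ ^ 2 := by
    calc |⟪s + gJ, s⟫| ≤ ‖s + gJ‖ * ‖s‖ := abs_real_inner_le_norm _ _
      _ ≤ ε * ‖s‖ ^ 2 := by nlinarith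
  have h3 : ⟪s + gJ, s⟫ = ⟪s, s⟫ + ⟪gJ, s⟫ := inner_add_left _ _ _
  have h4 : ⟪s, s⟫ = ‖s‖ ^ 2 := real_inner_self_eq_norm_sq s
  have hin : -(1 + ε) * ‖s‖ ^ 2 ≤ ⟪gJ, s⟫ := by
    have := abs_le.mp h2
    nlinarith
  have ha := abs_le.mp hJu
  have hb := abs_le.mp hJus
  nlinarith [mul_le_mul_of_nonneg_left hin (le_of_lt (mul_pos hα hc₁)), mul_pos hα hc₁, sq_nonneg ‖s‖]
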